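/- Let s, t ∈ ℝ and define K(z,w) := exp(−s(z+w))/(z+w) for all real z, w with z + w ≠ 0. Then for all such z, w one has the kernel reflection identity (z+t)·∂K/∂z(z,w) + s·z·K(z,w) = −∂/∂w[ (w−t)·K(z,w) ] − s·w·K(z,w). -/

import Mathlib

lemma aux_hasDerivAt (s b : ℝ) (a : ℝ) (h : a + b ≠ 0) :
    HasDerivAt (fun x => Real.exp (-(s * (x + b))) / (x + b))
      ((-s * Real.exp (-(s * (a + b))) * (a + b) - Real.exp (-(s * (a + b)))) / (a + b) ^ 2) a := by
  have hu : HasDerivAt (fun x => Real.exp (-(s * (x + b)))) (-s * Real.exp (-(s * (a + b)))) a := by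
    have h1 : HasDerivAt (fun x : ℝ => -(s * (x + b))) (-s) a := by
      have : HasDerivAt (fun x : ℝ => x + b) 1 a := (hasDerivAt_id a).add_const b
      have h2 := (this.const_mul s).neg
      simp only [mul_one] at h2
      exact h2
    simpa [mul_comm] using h1.exp
  have hv : HasDerivAt (fun x : ℝ => x + b) 1 a := (hasDerivAt_id a).add_const b
  have h3 := hu.div hv h
  simp only [mul_one] at h3
  exact h3

/-- Kernel-level reflection identity for the kernel `K(z,w) = e^{−s(z+w)}/(z+w)` of the
time-band limited Laplace operator associated to `ψ(x,z) = exp(−xz)`: the kernel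
satisfies `(z+t)∂_z K + szK = −∂_w[(w−t)K] − swK`, which is the kernel form of the
statement that the integral operator with kernel `K` reflects
`R_{s,t}(z,∂_z) = (z+t)∂_z + sz`. -/
theorem kernel_reflection_laplace (s t : ℝ) :
    let K : ℝ → ℝ → ℝ := fun z w => Real.exp (-(s * (z + w))) / (z + w)
    ∀ z w : ℝ, z + w ≠ 0 →
      (z + t) * deriv (fun z' => K z' w) z + s * z * K z w =
        -(deriv (fun w' => (w' - t) * K z w') w) - s * w * K z w := by
  intro K z w h
  have hz := aux_hasDerivAt s w z h
  have hw' : w + z ≠ 0 := by rwa [add_comm]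
  have hw0 := aux_hasDerivAt s z w hw'
  have hw1 : HasDerivAt (fun w' : ℝ => w' - t) 1 w := (hasDerivAt_id w).sub_const t
  have hw : HasDerivAt (fun w' => (w' - t) * (Real.exp (-(s * (w' + z))) / (w' + z)))
      (1 * (Real.exp (-(s * (w + z))) / (w + z)) +
        (w - t) * ((-s * Real.exp (-(s * (w + z))) * (w + z) - Real.exp (-(s * (w + z)))) / (w + z) ^ 2)) w :=
    hw1.mul hw0
  have e1 : deriv (fun z' => K z' w) z =
      (-s * Real.exp (-(s * (z + w))) * (z + w) - Real.exp (-(s * (z + w)))) / (z + w) ^ 2 :=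
    hz.deriv
  have e2 : deriv (fun w' => (w' - t) * K z w') w =
      1 * (Real.exp (-(s * (w + z))) / (w + z)) +
        (w - t) * ((-s * Real.exp (-(s * (w + z))) * (w + z) - Real.exp (-(s * (w + z)))) / (w + z) ^ 2) := by
    have : (fun w' => (w' - t) * K z w') =
        fun w' => (w' - t) * (Real.exp (-(s * (w' + z))) / (w' + z)) := by
      funext w'; simp [K, add_comm]
    rw [this]; exact hw.deriv
  rw [e1, e2]
  simp only [K]
  have hc : w + z = z + w := add_comm w z
  rw [hc]
  field_simp
  ring
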